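/- arXiv:0901.1651 — 5 statements merged into one kernel-verified Lean document; each statement's English description precedes it below -/
import Mathlib

section
/- Let R be a valuation domain, A a proper ideal of R, and L a prime ideal of R such that A^# ⊆ L (where A^# = {s ∈ R : sA ⊊ A} is the top prime ideal associated with A) and A is not isomorphic to L as an R-module. Then R/A is complete in its ideal topology if and only if R_L/A is complete in its ideal topology. -/
open Pointwise

universe u

/-- Linear compactness of `M` in the discrete topology. -/
def LinearlyCompact (R : Type*) (M : Type*) [CommRing R] [AddCommGroup M]
    [Module R M] : Prop :=
  ∀ (ι : Type) (a : ι → M) (N : ι → Submodule R M),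
    (∀ s : Finset ι, ∃ x : M, ∀ i ∈ s, x - a i ∈ N i) →
    ∃ x : M, ∀ i, x - a i ∈ N i

/-- A maximal valuation ring: linearly compact in the discrete topology. -/
def MaximalRing (R : Type*) [CommRing R] : Prop := LinearlyCompact R R

/-- Almost maximal: every proper quotient by a nonzero ideal is linearly compact. -/
def AlmostMaximalRing (R : Type*) [CommRing R] : Prop :=
  ∀ A : Ideal R, A ≠ ⊥ → LinearlyCompact R (R ⧸ A)

/-- `R/A` is complete in its ideal topology. -/
def CompleteInIdealTopology (R : Type*) [CommRing R] (A : Ideal R) : Prop :=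
  ∀ (ι : Type) (a : ι → R) (B : ι → Ideal R),
    (∀ i, A ≤ B i) → (⨅ i, B i) = A →
    (∀ i j, B i ≤ B j → a i - a j ∈ B j) →
    ∃ x : R, ∀ i, x - a i ∈ B i

/-- The top prime set `M^♯ = {s : sM ⊊ M}` of a module. -/
def sharpSet (R : Type*) (M : Type*) [CommRing R] [AddCommGroup M] [Module R M] : Set R :=
  {s : R | s • (⊤ : Submodule R M) ≠ ⊤}

/-- The top prime set of an ideal. -/
def sharpIdealSet (R : Type*) [CommRing R] (A : Ideal R) : Set R :=
  {s : R | s • A ≠ A}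

/-- content ideal of `x` in `U`. -/
def contentIdeal (R : Type*) {U : Type*} [CommRing R] [AddCommGroup U] [Module R U]
    (x : U) : Ideal R :=
  ⨅ A ∈ {A : Ideal R | x ∈ A • (⊤ : Submodule R U)}, A

/-- uniserial module -/
def IsUniserialModule (R : Type*) (M : Type*) [CommRing R] [AddCommGroup M] [Module R M] : Prop :=
  ∀ N N' : Submodule R M, N ≤ N' ∨ N' ≤ N

/-- relatively divisible (pure) submodule -/
def IsPureSub {R : Type*} {M : Type*} [CommRing R] [AddCommGroup M] [Module R M]
    (B : Submodule R M) : Prop :=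
  ∀ (r : R) (x : M), r • x ∈ B → ∃ y ∈ B, r • x = r • y

/-- `S` is a maximal immediate extension of `R`. -/
def IsMaximalImmediateExt (R S : Type*) [CommRing R] [CommRing S] [Algebra R S] : Prop :=
  Function.Injective (algebraMap R S) ∧
  (∀ s : S, s ≠ 0 → ∃ (r : R) (u : Sˣ), s = algebraMap R S r * u) ∧
  (∀ s : S, ∃ r : R, ¬ IsUnit (s - algebraMap R S r)) ∧
  LinearlyCompact S S

/-- `S` is the completion of `R` in the `R`-topology. -/
def IsRTopCompletion (R S : Type*) [CommRing R] [CommRing S] [Algebra R S] : Prop :=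
  Function.Injective (algebraMap R S) ∧
  (∀ s : S, ∀ r : R, r ≠ 0 → ∃ a : R, s - algebraMap R S a ∈ Ideal.span {algebraMap R S r}) ∧
  (∀ a : R → S,
    (∀ r t : R, r ∈ Ideal.span {t} → a r - a t ∈ Ideal.span {algebraMap R S t}) →
    ∃ s : S, ∀ r : R, r ≠ 0 → s - a r ∈ Ideal.span {algebraMap R S r})

/-- factor of two submodules -/
abbrev quotFactor {R : Type*} {M : Type*} [CommRing R] [AddCommGroup M] [Module R M]
    (H₁ H₂ : Submodule R M) : Type _ :=
  ↥H₂ ⧸ (H₁.comap H₂.subtype)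

section Aux

variable {R : Type u} [CommRing R] [IsDomain R] [ValuationRing R]

lemma ideal_le_total (I J : Ideal R) : I ≤ J ∨ J ≤ I :=
  Std.Total.total I J

variable {A L : Ideal R}

lemma cancel_of_not_sharp (hsharp : sharpIdealSet R A ⊆ (L : Set R)) {s : R} (hs : s ∉ L)
    {t : R} (h : s * t ∈ A) : t ∈ A := by
  have hsA : s • A = A := by
    by_contra hne
    exact hs (hsharp hne)
  have hs0 : s ≠ 0 := fun h0 => hs (h0 ▸ L.zero_mem)
  obtain ⟨a, ha, hae⟩ := Set.mem_smul_set.mp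
    (show s * t ∈ s • (A : Set R) by
      rw [← Submodule.coe_pointwise_smul, hsA]; exact h)
  have : a = t := mul_left_cancel₀ hs0 (by simpa [smul_eq_mul] using hae)
  exact this ▸ ha

lemma A_le_L_aux (hA : A ≠ ⊤) (hsharp : sharpIdealSet R A ⊆ (L : Set R)) : A ≤ L := by
  intro a ha
  by_cases h0 : a = 0
  · exact h0 ▸ L.zero_mem
  apply hsharp
  intro hEq
  obtain ⟨b, hb, hba⟩ := Set.mem_smul_set.mp
    (show a ∈ a • (A : Set R) by
      rw [← Submodule.coe_pointwise_smul, hEq]; exact ha)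
  have hb1 : b = 1 := mul_left_cancel₀ h0 (by simpa [smul_eq_mul] using hba)
  exact hA (Ideal.eq_top_iff_one A |>.mpr (hb1 ▸ hb))

lemma sat_step [L.IsPrime] {B : Ideal R} {s t : R} (hs : s ∉ L) (h : s * t ∈ B) :
    ∀ l ∈ L, t * l ∈ B := by
  intro l hl
  obtain ⟨c, hc | hc⟩ := ValuationRing.cond s l
  · have : t * l = (s * t) * c := by rw [← hc]; ring
    rw [this]
    exact B.mul_mem_right c h
  · exact absurd (hc ▸ L.mul_mem_right c hl) hs

lemma core (hA : A ≠ ⊤) (hsharp : sharpIdealSet R A ⊆ (L : Set R))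
    (hniso : ¬ Nonempty (↥A ≃ₗ[R] ↥L))
    {t : R} (ht : t ∉ A) (h : ∀ l ∈ L, t * l ∈ A) : False := by
  have ht0 : t ≠ 0 := fun h0 => ht (h0 ▸ A.zero_mem)
  have hAt : A ≤ Ideal.span {t} := by
    rcases ideal_le_total A (Ideal.span {t}) with h' | h'
    · exact h'
    · exact absurd (h' (Ideal.mem_span_singleton_self t)) ht
  let f : L →ₗ[R] A :=
    { toFun := fun l => ⟨t * l.1, h l.1 l.2⟩
      map_add' := fun x y => Subtype.ext (by simp [mul_add])
      map_smul' := fun m x => Subtype.ext (by simp [smul_eq_mul]; ring) }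
  have hinj : Function.Injective f := by
    intro x y hxy
    exact Subtype.ext (mul_left_cancel₀ ht0 (congrArg Subtype.val hxy))
  have hsurj : Function.Surjective f := by
    rintro ⟨a, haA⟩
    obtain ⟨c, hc⟩ := Ideal.mem_span_singleton'.mp (hAt haA)
    have hcL : c ∈ L := by
      by_cases hc0 : c = 0
      · exact hc0 ▸ L.zero_mem
      apply hsharp
      intro hEq
      obtain ⟨a', ha', hae⟩ := Set.mem_smul_set.mp
        (show a ∈ c • (A : Set R) by
          rw [← Submodule.coe_pointwise_smul, hEq]; exact haA)
      have : a' = t := by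
        apply mul_left_cancel₀ hc0
        rw [show (c : R) * a' = a from by simpa [smul_eq_mul] using hae, ← hc]
      exact ht (this ▸ ha')
    refine ⟨⟨c, hcL⟩, Subtype.ext ?_⟩
    show t * c = a
    rw [← hc]; ring
  exact hniso ⟨(LinearEquiv.ofBijective f ⟨hinj, hsurj⟩).symm⟩

end Aux

/-- For a valuation domain `R`, a proper ideal `A` and a prime `L` with
`A^♯ ⊆ L` and `A` not isomorphic to `L`, `R/A` is complete in its ideal topology iff
`R_L/A` is complete in its ideal topology. -/


theorem stmt_0 (R : Type u) [CommRing R] [IsDomain R] [ValuationRing R]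
    (A : Ideal R) (hA : A ≠ ⊤) (L : Ideal R) [L.IsPrime]
    (hsharp : sharpIdealSet R A ⊆ (L : Set R))
    (hniso : ¬ Nonempty (↥A ≃ₗ[R] ↥L)) :
    CompleteInIdealTopology R A ↔
      CompleteInIdealTopology (Localization.AtPrime L)
        (Ideal.map (algebraMap R (Localization.AtPrime L)) A) := by
  classical
  set S := Localization.AtPrime L with hS
  set φ := algebraMap R S with hφ
  have injφ : Function.Injective φ := IsLocalization.injective S L.primeCompl_le_nonZeroDivisors
  have key_sat : ∀ {B : Ideal R} {t : R}, φ t ∈ Ideal.map φ B → ∃ s, s ∉ L ∧ s * t ∈ B := by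
    intro B t h
    obtain ⟨⟨b, s⟩, hx⟩ := (IsLocalization.mem_map_algebraMap_iff L.primeCompl S).mp h
    refine ⟨s.1, s.2, ?_⟩
    have h1 : φ (t * s.1) = φ b.1 := by rw [map_mul]; exact hx
    have h2 : t * s.1 = b.1 := injφ h1
    have : s.1 * t = b.1 := by rw [← h2]; ring
    exact this ▸ b.2
  have elemL : ∀ {z : S}, z ∈ Ideal.map φ L → ∃ r : R, φ r = z := by
    intro z hz
    obtain ⟨⟨b, s⟩, hx⟩ := (IsLocalization.mem_map_algebraMap_iff L.primeCompl S).mp hz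
    obtain ⟨c, hc | hc⟩ := ValuationRing.cond (s : R) (b : R)
    · refine ⟨c, ?_⟩
      have hu : IsUnit (φ (s : R)) := IsLocalization.map_units S s
      have h2 : φ c * φ (s : R) = z * φ (s : R) := by
        rw [← map_mul, mul_comm c (s : R), hc, ← hx]
      exact hu.mul_right_cancel h2
    · exact absurd (hc ▸ L.mul_mem_right c b.2) s.2
  have lemapL : ∀ {J : Ideal S}, J ≠ ⊤ → J ≤ Ideal.map φ L := by
    intro J hJ
    exact le_trans (IsLocalRing.le_maximalIdeal hJ)
      (le_of_eq (Localization.AtPrime.map_eq_maximalIdeal (I := L)).symm)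
  constructor
  · intro hc ι a B hAB hInf hcompat
    by_cases hall : ∀ i, B i = ⊤
    · exact ⟨0, fun i => by rw [hall i]; exact Submodule.mem_top⟩
    push_neg at hall
    obtain ⟨i0, hi0⟩ := hall
    have hmapcomap : ∀ i, Ideal.map φ (Ideal.comap φ (B i)) = B i :=
      fun i => IsLocalization.map_comap L.primeCompl S (B i)
    have hcomp : ∀ i j, B i ≤ B j ∨ B j ≤ B i := by
      intro i j
      rcases ideal_le_total (Ideal.comap φ (B i)) (Ideal.comap φ (B j)) with h | h
      · exact Or.inl (by rw [← hmapcomap i, ← hmapcomap j]; exact Ideal.map_mono h)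
      · exact Or.inr (by rw [← hmapcomap i, ← hmapcomap j]; exact Ideal.map_mono h)
    have hbex : ∀ i, B i ≠ ⊤ → ∃ r : R, φ r = a i - a i0 := by
      intro i hi
      apply elemL
      rcases hcomp i i0 with h | h
      · exact lemapL hi0 (hcompat i i0 h)
      · have h1 := hcompat i0 i h
        have h2 : a i - a i0 = -(a i0 - a i) := by ring
        rw [h2]
        exact lemapL hi (neg_mem h1)
    set b : ι → R := fun i => if h : B i = ⊤ then 0 else (hbex i h).choose with hb
    have hbspec : ∀ i (h : B i ≠ ⊤), φ (b i) = a i - a i0 := by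
      intro i h
      simp only [hb, dif_neg h]
      exact (hbex i h).choose_spec
    set D : ι → Ideal R := fun i => if B i = ⊤ then ⊤ else Ideal.comap φ (B i) with hD
    have hDtop : ∀ i, B i ≠ ⊤ → D i = Ideal.comap φ (B i) := fun i h => if_neg h
    have hAD : ∀ i, A ≤ D i := by
      intro i
      by_cases h : B i = ⊤
      · rw [show D i = ⊤ from if_pos h]; exact le_top
      · rw [hDtop i h]
        intro t htA
        exact hAB i (Ideal.mem_map_of_mem φ htA)
    have hinfD : (⨅ i, D i) = A := by
      apply le_antisymm
      · intro t ht
        rw [Submodule.mem_iInf] at ht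
        have hφt : φ t ∈ Ideal.map φ A := by
          rw [← hInf, Submodule.mem_iInf]
          intro i
          by_cases h : B i = ⊤
          · rw [h]; exact Submodule.mem_top
          · have h2 := ht i
            rw [hDtop i h] at h2
            exact h2
        obtain ⟨s, hs, hst⟩ := key_sat hφt
        exact cancel_of_not_sharp hsharp hs hst
      · exact le_iInf hAD
    have hcompD : ∀ i j, D i ≤ D j → b i - b j ∈ D j := by
      intro i j hij
      by_cases hj : B j = ⊤
      · rw [show D j = ⊤ from if_pos hj]; exact Submodule.mem_top
      · by_cases hi : B i = ⊤
        · exfalso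
          apply hj
          have hDj : Ideal.comap φ (B j) = ⊤ := by
            rw [← hDtop j hj]
            apply top_le_iff.mp
            calc (⊤ : Ideal R) = D i := by rw [show D i = ⊤ from if_pos hi]
            _ ≤ D j := hij
          rw [← hmapcomap j, hDj, Ideal.map_top]
        · rw [hDtop i hi, hDtop j hj] at hij
          have hBij : B i ≤ B j := by
            rw [← hmapcomap i, ← hmapcomap j]; exact Ideal.map_mono hij
          rw [hDtop j hj, Ideal.mem_comap, map_sub, hbspec i hi, hbspec j hj]
          have h3 : a i - a i0 - (a j - a i0) = a i - a j := by ring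
          rw [h3]
          exact hcompat i j hBij
    obtain ⟨x, hx⟩ := hc ι b D hAD hinfD hcompD
    refine ⟨φ x + a i0, fun i => ?_⟩
    by_cases h : B i = ⊤
    · rw [h]; exact Submodule.mem_top
    · have h4 : φ x + a i0 - a i = φ (x - b i) := by rw [map_sub, hbspec i h]; ring
      rw [h4]
      have h5 := hx i
      rw [hDtop i h] at h5
      exact Ideal.mem_comap.mp h5
  · intro hc ι a B hAB hInf hcompat
    have hAL : A ≤ L := A_le_L_aux hA hsharp
    have hALiso : A ≠ L := by
      intro h
      exact hniso (by rw [h]; exact ⟨LinearEquiv.refl R L⟩)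
    obtain ⟨i0, hi0L⟩ : ∃ i0, B i0 ≤ L := by
      by_contra hno
      push_neg at hno
      have hall : ∀ i, L ≤ B i := fun i => (ideal_le_total (B i) L).resolve_left (hno i).not_ge
      exact hALiso (le_antisymm hAL (hInf ▸ le_iInf hall))
    have hkey : (⨅ i, Ideal.map φ (B i)) = Ideal.map φ A := by
      apply le_antisymm
      · intro z hz
        rw [Submodule.mem_iInf] at hz
        obtain ⟨t, rfl⟩ := elemL (Ideal.map_mono hi0L (hz i0))
        refine Ideal.mem_map_of_mem φ ?_
        by_contra htA
        refine core hA hsharp hniso htA ?_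
        intro l hl
        rw [← hInf, Submodule.mem_iInf]
        intro i
        obtain ⟨s, hs, hst⟩ := key_sat (hz i)
        exact sat_step hs hst l hl
      · exact le_iInf fun i => Ideal.map_mono (hAB i)
    have hcompat' : ∀ i j, Ideal.map φ (B i) ≤ Ideal.map φ (B j) →
        (fun i => φ (a i)) i - (fun i => φ (a i)) j ∈ Ideal.map φ (B j) := by
      intro i j hij
      rcases ideal_le_total (B i) (B j) with h | h
      · show φ (a i) - φ (a j) ∈ _
        rw [← map_sub]
        exact Ideal.mem_map_of_mem φ (hcompat i j h)
      · apply hij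
        show φ (a i) - φ (a j) ∈ Ideal.map φ (B i)
        have h1 : φ (a i) - φ (a j) = -(φ (a j - a i)) := by rw [map_sub]; ring
        rw [h1]
        exact neg_mem (Ideal.mem_map_of_mem φ (hcompat j i h))
    obtain ⟨y, hy⟩ := hc ι (fun i => φ (a i)) (fun i => Ideal.map φ (B i))
      (fun i => Ideal.map_mono (hAB i)) hkey hcompat'
    obtain ⟨r0, hr0⟩ := elemL (Ideal.map_mono hi0L (hy i0))
    set x' := r0 + a i0 with hx'
    have hφx : φ x' = y := by
      rw [hx', map_add, hr0]; ring
    have hsat : ∀ i, ∃ s, s ∉ L ∧ s * (x' - a i) ∈ B i := by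
      intro i
      apply key_sat
      rw [map_sub, hφx]
      exact hy i
    refine ⟨x', fun i => ?_⟩
    by_contra hri
    have hrA : x' - a i ∉ A := fun h => hri (hAB i h)
    refine core hA hsharp hniso hrA ?_
    intro l hl
    rw [← hInf, Submodule.mem_iInf]
    intro j
    rcases ideal_le_total (B i) (B j) with hij | hji
    · obtain ⟨s, hs, hst⟩ := hsat i
      exact hij (sat_step hs hst l hl)
    · obtain ⟨s, hs, hst⟩ := hsat j
      have hrjL := sat_step hs hst
      have hdmem : (x' - a i) - (x' - a j) ∈ B i := by
        have h1 : (x' - a i) - (x' - a j) = a j - a i := by ring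
        rw [h1]
        exact hcompat j i hji
      have hBspan : B i ≤ Ideal.span {x' - a i} := by
        rcases ideal_le_total (B i) (Ideal.span {x' - a i}) with h | h
        · exact h
        · exact absurd (h (Ideal.mem_span_singleton_self _)) hri
      obtain ⟨c, hcc⟩ := Ideal.mem_span_singleton'.mp (hBspan hdmem)
      have hcnu : ¬ IsUnit c := by
        intro hcu
        obtain ⟨d, hd⟩ := hcu.exists_left_inv
        apply hri
        have h2 : x' - a i = d * (c * (x' - a i)) := by rw [← mul_assoc, hd, one_mul]
        rw [h2, hcc]
        exact (B i).mul_mem_left d hdmem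
      have h1c : IsUnit (1 - c) := by
        by_contra h1c
        have h3 := IsLocalRing.nonunits_add (mem_nonunits_iff.mpr h1c) (mem_nonunits_iff.mpr hcnu)
        have h4 : (1 - c) + c = 1 := by ring
        rw [h4] at h3
        exact (mem_nonunits_iff.mp h3) isUnit_one
      obtain ⟨v, hv⟩ := h1c.exists_right_inv
      have heq : (x' - a i) * l = (x' - a j) * (v * l) := by
        have hrj : x' - a j = (x' - a i) * (1 - c) := by
          rw [mul_sub, mul_one, mul_comm (x' - a i) c, hcc]; ring
        rw [hrj]
        linear_combination (-((x' - a i) * l)) * hv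
      rw [heq]
      exact hrjL (v * l) (L.mul_mem_left v hl)
end

section
/- Let R be a valuation ring and L a nonzero prime ideal of R. Then R is maximal (respectively almost maximal) if and only if R/L is maximal and the localization R_L is maximal (respectively almost maximal). -/
open Pointwise

universe u

namespace Stmt1

variable {R : Type u} [CommRing R]

/-- The saturation of an ideal `B` with respect to the prime `L`. -/
def satI (L : Ideal R) [L.IsPrime] (B : Ideal R) : Ideal R where
  carrier := {x | ∃ s, s ∉ L ∧ s * x ∈ B}
  zero_mem' := ⟨1, (Ideal.ne_top_iff_one L).1 ‹L.IsPrime›.ne_top, by simp⟩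
  add_mem' := by
    rintro x y ⟨s, hs, hsx⟩ ⟨t, ht, hty⟩
    refine ⟨s * t, fun h => ((‹L.IsPrime›.mem_or_mem h).elim hs ht), ?_⟩
    have : s * t * (x + y) = t * (s * x) + s * (t * y) := by ring
    rw [this]
    exact Ideal.add_mem _ (Ideal.mul_mem_left _ _ hsx) (Ideal.mul_mem_left _ _ hty)
  smul_mem' := by
    rintro c x ⟨s, hs, hsx⟩
    refine ⟨s, hs, ?_⟩
    have : s * (c • x) = c * (s * x) := by simp [smul_eq_mul]; ring
    rw [this]
    exact Ideal.mul_mem_left _ _ hsx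

lemma mem_satI {L : Ideal R} [L.IsPrime] {B : Ideal R} {x : R} :
    x ∈ satI L B ↔ ∃ s, s ∉ L ∧ s * x ∈ B := Iff.rfl

lemma le_satI (L : Ideal R) [L.IsPrime] (B : Ideal R) : B ≤ satI L B :=
  fun x hx => ⟨1, (Ideal.ne_top_iff_one L).1 ‹L.IsPrime›.ne_top, by simpa using hx⟩

lemma satI_mono (L : Ideal R) [L.IsPrime] {B C : Ideal R} (h : B ≤ C) :
    satI L B ≤ satI L C := by
  rintro x ⟨s, hs, hsx⟩; exact ⟨s, hs, h hsx⟩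

/-- In a valuation ring, `L ≤ (s)` for any `s ∉ L`. -/
lemma L_le_span (hchain : ∀ I J : Ideal R, I ≤ J ∨ J ≤ I) (L : Ideal R)
    {s : R} (hs : s ∉ L) : L ≤ Ideal.span {s} := by
  rcases hchain (Ideal.span {s}) L with h | h
  · exact absurd (h (Ideal.subset_span rfl)) hs
  · exact h

/-- `L · satI L B ⊆ B`. -/
lemma L_mul_satI (hchain : ∀ I J : Ideal R, I ≤ J ∨ J ≤ I) (L : Ideal R) [L.IsPrime]
    {B : Ideal R} {x ℓ : R} (hx : x ∈ satI L B) (hℓ : ℓ ∈ L) : ℓ * x ∈ B := by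
  obtain ⟨s, hs, hsx⟩ := hx
  obtain ⟨r, hr⟩ := Ideal.mem_span_singleton'.1 (L_le_span hchain L hs hℓ)
  have : ℓ * x = r * (s * x) := by rw [← hr]; ring
  rw [this]; exact Ideal.mul_mem_left _ _ hsx

/-- The "colon by an element" ideal `{r | t * r ∈ B}`. -/
def colonI (t : R) (B : Ideal R) : Ideal R where
  carrier := {r | t * r ∈ B}
  zero_mem' := by simp
  add_mem' := by
    intro x y hx hy
    show t * (x + y) ∈ B
    rw [mul_add]; exact Ideal.add_mem _ hx hy
  smul_mem' := by
    intro c x hx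
    show t * (c • x) ∈ B
    have : t * (c • x) = c * (t * x) := by simp [smul_eq_mul]; ring
    rw [this]; exact Ideal.mul_mem_left _ _ hx

lemma mem_colonI {t : R} {B : Ideal R} {r : R} : r ∈ colonI t B ↔ t * r ∈ B := Iff.rfl

/-- A finite family of ideals in a chain has a minimum. -/
lemma chainMin (hchain : ∀ I J : Ideal R, I ≤ J ∨ J ≤ I) {ι : Type*} (C : ι → Ideal R)
    (s : Finset ι) (hs : s.Nonempty) : ∃ i ∈ s, ∀ j ∈ s, C i ≤ C j := by
  classical
  induction s using Finset.induction with
  | empty => exact absurd hs (by simp)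
  | insert k s' hnotmem ih =>
    rcases s'.eq_empty_or_nonempty with rfl | hs'
    · exact ⟨k, by simp, by simp⟩
    · obtain ⟨i, his, hmin⟩ := ih hs'
      rcases hchain (C i) (C k) with h | h
      · exact ⟨i, Finset.mem_insert_of_mem his, by
          intro j hj
          rcases Finset.mem_insert.1 hj with rfl | hj
          · exact h
          · exact hmin j hj⟩
      · exact ⟨k, Finset.mem_insert_self _ _, by
          intro j hj
          rcases Finset.mem_insert.1 hj with rfl | hj
          · exact le_rfl
          · exact le_trans h (hmin j hj)⟩

/-- From the pairwise condition we get the finite intersection property. -/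
lemma pair_to_fip (hchain : ∀ I J : Ideal R, I ≤ J ∨ J ≤ I) {ι : Type*}
    (a : ι → R) (B : ι → Ideal R)
    (hpair : ∀ i j, B i ≤ B j → a i - a j ∈ B j) :
    ∀ s : Finset ι, ∃ x : R, ∀ i ∈ s, x - a i ∈ B i := by
  intro s
  rcases s.eq_empty_or_nonempty with rfl | hs
  · exact ⟨0, by simp⟩
  · obtain ⟨i, his, hmin⟩ := chainMin hchain B s hs
    exact ⟨a i, fun j hj => hpair i j (hmin j hj)⟩

/-- Solving a chain family of cosets of ideals all containing `L`, using maximality of `R/L`. -/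
lemma rl_solve (L : Ideal R) (hRL : MaximalRing (R ⧸ L)) (ι : Type)
    (a : ι → R) (B : ι → Ideal R) (hLB : ∀ i, L ≤ B i)
    (hFIP : ∀ s : Finset ι, ∃ x : R, ∀ i ∈ s, x - a i ∈ B i) :
    ∃ d : R, ∀ i, d - a i ∈ B i := by
  set π := Ideal.Quotient.mk L with hπ
  have hFIP' : ∀ s : Finset ι, ∃ x : R ⧸ L, ∀ i ∈ s,
      x - π (a i) ∈ Ideal.map π (B i) := by
    intro s
    obtain ⟨x, hx⟩ := hFIP s
    exact ⟨π x, fun i hi => by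
      rw [← map_sub]
      exact Ideal.mem_map_of_mem π (hx i hi)⟩
  obtain ⟨x, hx⟩ := hRL ι (fun i => π (a i)) (fun i => Ideal.map π (B i)) hFIP'
  obtain ⟨y, rfl⟩ := Ideal.Quotient.mk_surjective x
  refine ⟨y, fun i => ?_⟩
  have h1 : π (y - a i) ∈ Ideal.map π (B i) := by
    rw [map_sub]; exact hx i
  have h2 : y - a i ∈ Ideal.comap π (Ideal.map π (B i)) := h1
  rw [Ideal.comap_map_of_surjective π Ideal.Quotient.mk_surjective] at h2
  have hker : Ideal.comap π (⊥ : Ideal (R ⧸ L)) = L := by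
    ext z
    simp [Ideal.mem_comap, Ideal.Quotient.eq_zero_iff_mem, hπ]
  rw [hker, sup_eq_left.2 (hLB i)] at h2
  exact h2

variable (L : Ideal R) [L.IsPrime]

local notation "S" => Localization.AtPrime L
local notation "f" => algebraMap R (Localization.AtPrime L)

lemma L_le_span' (hchain : ∀ I J : Ideal R, I ≤ J ∨ J ≤ I) {s : R} (hs : s ∉ L) :
    L ≤ Ideal.span {s} := by
  rcases hchain (Ideal.span {s}) L with h | h
  · exact absurd (h (Ideal.subset_span rfl)) hs
  · exact h

lemma cancel_unit {s : R} (hs : s ∉ L) {y z : S} (h : f s * y = f s * z) : y = z := by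
  have hu : IsUnit (f s) := IsLocalization.map_units _ (⟨s, hs⟩ : L.primeCompl)
  exact hu.mul_left_cancel h

lemma loc_rep (hchain : ∀ I J : Ideal R, I ≤ J ∨ J ≤ I) {B : Ideal R} (hB : B ≤ L)
    {y : S} (hy : y ∈ Ideal.map f B) :
    ∃ m : R, (∃ s, s ∉ L ∧ s * m ∈ B) ∧ f m = y := by
  obtain ⟨⟨b, t⟩, hbt⟩ := (IsLocalization.mem_map_algebraMap_iff L.primeCompl S).1 hy
  have hb : (b : R) ∈ L := hB b.2
  obtain ⟨m, hm⟩ := Ideal.mem_span_singleton'.1 (L_le_span' L hchain t.2 hb)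
  refine ⟨m, ⟨t, t.2, by rw [mul_comm, hm]; exact b.2⟩, ?_⟩
  apply cancel_unit L t.2
  rw [mul_comm (f (t : R)) y, hbt, ← map_mul, mul_comm (t : R) m, hm]

lemma satI_mem_map {B : Ideal R} {m : R} (hm : ∃ s, s ∉ L ∧ s * m ∈ B) :
    f m ∈ Ideal.map f B := by
  obtain ⟨s, hs, hsm⟩ := hm
  have h1 : f (s * m) ∈ Ideal.map f B := Ideal.mem_map_of_mem f hsm
  obtain ⟨u, hu⟩ : IsUnit (f s) := IsLocalization.map_units _ (⟨s, hs⟩ : L.primeCompl)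
  have : f m = (↑u⁻¹ : S) * f (s * m) := by
    rw [map_mul, ← hu, ← mul_assoc]
    simp
  rw [this]
  exact Ideal.mul_mem_left _ _ h1

lemma loc_ker {x : R} : f x = 0 ↔ ∃ s, s ∉ L ∧ s * x = 0 := by
  rw [IsLocalization.map_eq_zero_iff L.primeCompl]
  constructor
  · rintro ⟨m, hm⟩; exact ⟨m, m.2, hm⟩
  · rintro ⟨s, hs, h⟩; exact ⟨⟨s, hs⟩, h⟩

lemma proper_rep (hchain : ∀ I J : Ideal R, I ≤ J ∨ J ≤ I) {J : Ideal S} (hJ : J ≠ ⊤)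
    {y : S} (hy : y ∈ J) : ∃ m ∈ L, f m = y := by
  obtain ⟨⟨r, t⟩, hrt⟩ := IsLocalization.surj L.primeCompl y
  by_cases hr : r ∈ L
  · obtain ⟨m, hm⟩ := Ideal.mem_span_singleton'.1 (L_le_span' L hchain t.2 hr)
    refine ⟨m, ?_, ?_⟩
    · by_contra hmL
      have hmt : m * (t : R) ∈ L := by rw [hm]; exact hr
      rcases Ideal.IsPrime.mem_or_mem ‹L.IsPrime› hmt with h | h
      · exact hmL h
      · exact t.2 h
    · apply cancel_unit L t.2
      rw [mul_comm (f (t:R)) y, hrt, ← map_mul, mul_comm (t:R) m, hm]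
  · exfalso
    have hu : IsUnit (f r) := IsLocalization.map_units _ (⟨r, hr⟩ : L.primeCompl)
    have : f r ∈ J := by
      rw [← hrt]; exact Ideal.mul_mem_right _ _ hy
    exact hJ (J.eq_top_of_isUnit_mem this hu)

lemma Schain (hchain : ∀ I J : Ideal R, I ≤ J ∨ J ≤ I) (J J' : Ideal S) :
    J ≤ J' ∨ J' ≤ J := by
  rcases hchain (Ideal.comap f J) (Ideal.comap f J') with h | h
  · left
    rw [← IsLocalization.map_comap L.primeCompl S J, ← IsLocalization.map_comap L.primeCompl S J']
    exact Ideal.map_mono h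
  · right
    rw [← IsLocalization.map_comap L.primeCompl S J, ← IsLocalization.map_comap L.primeCompl S J']
    exact Ideal.map_mono h

lemma comap_ne_bot {J : Ideal S} (hJ : J ≠ ⊥) : Ideal.comap f J ≠ ⊥ := by
  obtain ⟨y, hyJ, hy0⟩ := (Submodule.ne_bot_iff J).1 hJ
  obtain ⟨⟨r, t⟩, hrt⟩ := IsLocalization.surj L.primeCompl y
  have hrJ : f r ∈ J := by rw [← hrt]; exact Ideal.mul_mem_right _ _ hyJ
  intro h
  have hr0 : r = 0 := by
    have : r ∈ Ideal.comap f J := hrJ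
    rw [h] at this
    simpa using this
  apply hy0
  apply cancel_unit L t.2 (z := 0)
  rw [mul_comm, hrt, hr0, map_zero, mul_zero]


set_option linter.unusedSectionVars false

lemma sigma_tail (hchain : ∀ I J : Ideal R, I ≤ J ∨ J ≤ I) {ι : Type}
    (a : ι → R) (B : ι → Ideal R) (hBL : ∀ i, B i ≤ L)
    (hσ : ∃ σ : S, ∀ i, σ - f (a i) ∈ Ideal.map f (B i)) :
    ∃ x₀ : R, ∀ i, x₀ - a i ∈ satI L (B i) := by
  rcases isEmpty_or_nonempty ι with hι | ⟨⟨i₁⟩⟩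
  · exact ⟨0, fun i => (hι.false i).elim⟩
  obtain ⟨σ, hσ⟩ := hσ
  obtain ⟨m₁, _, hm₁⟩ := loc_rep L hchain (hBL i₁) (hσ i₁)
  set x₀ := a i₁ + m₁ with hx₀
  have hfx₀ : f x₀ = σ := by
    rw [hx₀, map_add, hm₁]; ring
  refine ⟨x₀, fun i => ?_⟩
  have h2 : f (x₀ - a i) ∈ Ideal.map f (B i) := by
    rw [map_sub, hfx₀]; exact hσ i
  obtain ⟨m, hmsat, hm⟩ := loc_rep L hchain (hBL i) h2
  have hk : f (x₀ - a i - m) = 0 := by rw [map_sub, hm, sub_self]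
  obtain ⟨s, hs, hsk⟩ := (loc_ker L).1 hk
  have hEq : x₀ - a i = m + (x₀ - a i - m) := by ring
  rw [hEq]
  exact Ideal.add_mem _ hmsat ⟨s, hs, by rw [hsk]; exact (B i).zero_mem⟩

lemma sigma_max (hchain : ∀ I J : Ideal R, I ≤ J ∨ J ≤ I)
    (hS : MaximalRing (Localization.AtPrime L)) {ι : Type}
    (a : ι → R) (B : ι → Ideal R) (hBL : ∀ i, B i ≤ L)
    (hpair : ∀ i j, B i ≤ B j → a i - a j ∈ B j) :
    ∃ x₀ : R, ∀ i, x₀ - a i ∈ satI L (B i) := by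
  apply sigma_tail L hchain a B hBL
  have hFIP : ∀ s : Finset ι, ∃ x : S, ∀ i ∈ s, x - f (a i) ∈ Ideal.map f (B i) := by
    intro s
    rcases s.eq_empty_or_nonempty with rfl | hs
    · exact ⟨0, by simp⟩
    · obtain ⟨i, his, hmin⟩ := chainMin hchain B s hs
      exact ⟨f (a i), fun j hj => by
        rw [← map_sub]
        exact Ideal.mem_map_of_mem _ (hpair i j (hmin j hj))⟩
  exact hS ι (fun i => f (a i)) (fun i => Ideal.map f (B i)) hFIP

lemma sigma_almost (hchain : ∀ I J : Ideal R, I ≤ J ∨ J ≤ I)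
    (hSal : AlmostMaximalRing (Localization.AtPrime L)) {ι : Type}
    (a : ι → R) (B : ι → Ideal R) (hBL : ∀ i, B i ≤ L)
    (hpair : ∀ i j, B i ≤ B j → a i - a j ∈ B j)
    (x₁ : R) (hx₁0 : f x₁ ≠ 0) (hx₁ : ∀ i, x₁ ∈ satI L (B i)) :
    ∃ x₀ : R, ∀ i, x₀ - a i ∈ satI L (B i) := by
  apply sigma_tail L hchain a B hBL
  set J : Ideal S := Ideal.span {f x₁} with hJdef
  have hJ : J ≠ ⊥ := by
    rw [hJdef, Ne, Ideal.span_singleton_eq_bot]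
    exact hx₁0
  have hJle : ∀ i, J ≤ Ideal.map f (B i) := by
    intro i
    rw [hJdef, Ideal.span_le]
    intro y hy
    rw [Set.mem_singleton_iff.1 hy]
    exact satI_mem_map L (hx₁ i)
  have LC := hSal J hJ
  have hFIPq : ∀ s : Finset ι, ∃ x : S ⧸ J, ∀ i ∈ s,
      x - J.mkQ (f (a i)) ∈ Submodule.map J.mkQ (Ideal.map f (B i)) := by
    intro s
    rcases s.eq_empty_or_nonempty with rfl | hs
    · exact ⟨0, by simp⟩
    · obtain ⟨i, his, hmin⟩ := chainMin hchain B s hs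
      refine ⟨J.mkQ (f (a i)), fun j hj => ?_⟩
      rw [← map_sub, ← map_sub]
      exact Submodule.mem_map_of_mem (Ideal.mem_map_of_mem _ (hpair i j (hmin j hj)))
  obtain ⟨ξ, hξ⟩ := LC ι (fun i => J.mkQ (f (a i))) (fun i => Submodule.map J.mkQ (Ideal.map f (B i))) hFIPq
  obtain ⟨σ, rfl⟩ := Submodule.Quotient.mk_surjective J ξ
  refine ⟨σ, fun i => ?_⟩
  have h1 : J.mkQ (σ - f (a i)) ∈ Submodule.map J.mkQ (Ideal.map f (B i)) := by
    rw [map_sub]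
    exact hξ i
  have h2 : σ - f (a i) ∈ Submodule.comap J.mkQ (Submodule.map J.mkQ (Ideal.map f (B i))) := h1
  rw [Submodule.comap_map_eq, Submodule.ker_mkQ, sup_eq_left.2 (hJle i)] at h2
  exact h2

lemma small_solve (hchain : ∀ I J : Ideal R, I ≤ J ∨ J ≤ I)
    (hRL : MaximalRing (R ⧸ L)) {ι : Type}
    (a : ι → R) (B : ι → Ideal R) (hBL : ∀ i, B i ≤ L)
    (hpair : ∀ i j, B i ≤ B j → a i - a j ∈ B j)
    (horacle : (¬ ∃ i₀, ∀ j, B i₀ ≤ B j) →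
      (¬ ∃ t, (∀ j, ∀ ℓ ∈ L, ℓ * t ∈ B j) ∧ ∃ j₁, t ∉ B j₁) →
      ∃ x₀, ∀ i, x₀ - a i ∈ satI L (B i)) :
    ∃ d : R, ∀ i, d - a i ∈ B i := by
  by_cases hW1 : ∃ i₀, ∀ j, B i₀ ≤ B j
  · obtain ⟨i₀, h⟩ := hW1
    exact ⟨a i₀, fun j => hpair i₀ j (h j)⟩
  by_cases hW2 : ∃ t, (∀ j, ∀ ℓ ∈ L, ℓ * t ∈ B j) ∧ ∃ j₁, t ∉ B j₁
  · obtain ⟨t, htL, j₁, htj₁⟩ := hW2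
    have hspan : B j₁ ≤ Ideal.span {t} := by
      rcases hchain (B j₁) (Ideal.span {t}) with h | h
      · exact h
      · exact absurd (h (Ideal.subset_span rfl)) htj₁
    have hgex : ∀ j : {j : ι // B j ≤ B j₁}, ∃ g, g * t = a j.1 - a j₁ := fun j =>
      Ideal.mem_span_singleton'.1 (hspan (hpair j.1 j₁ j.2))
    choose g hg using hgex
    have hFIPG : ∀ s : Finset {j : ι // B j ≤ B j₁}, ∃ x, ∀ j ∈ s,
        x - g j ∈ colonI t (B j.1) := by
      intro s
      rcases s.eq_empty_or_nonempty with rfl | hs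
      · exact ⟨0, by simp⟩
      obtain ⟨j, hjs, hmin⟩ := chainMin hchain (fun j : {j : ι // B j ≤ B j₁} => B j.1) s hs
      refine ⟨g j, fun k hks => ?_⟩
      show t * (g j - g k) ∈ B k.1
      have h1 : t * (g j - g k) = (g j * t) - (g k * t) := by ring
      rw [h1, hg, hg]
      have h2 : (a j.1 - a j₁) - (a k.1 - a j₁) = a j.1 - a k.1 := by ring
      rw [h2]
      exact hpair j.1 k.1 (hmin k hks)
    obtain ⟨y, hy⟩ := rl_solve L hRL _ g (fun j => colonI t (B j.1))
      (fun j ℓ hℓ => show t * ℓ ∈ B j.1 by rw [mul_comm]; exact htL j.1 ℓ hℓ) hFIPG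
    refine ⟨a j₁ + t * y, fun i => ?_⟩
    by_cases hiT : B i ≤ B j₁
    · have hgi := hg ⟨i, hiT⟩
      have h3 : a j₁ + t * y - a i = t * (y - g ⟨i, hiT⟩) := by
        rw [mul_sub, mul_comm t (g _), hgi]; ring
      rw [h3]
      exact hy ⟨i, hiT⟩
    · have hj₁i : B j₁ ≤ B i := (hchain _ _).resolve_left hiT
      have hz : t * g ⟨j₁, le_rfl⟩ = 0 := by rw [mul_comm, hg]; simp
      have h3 : a j₁ + t * y - a i = t * (y - g ⟨j₁, le_rfl⟩) + (a j₁ - a i) := by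
        rw [mul_sub, hz]; ring
      rw [h3]
      exact Ideal.add_mem _ (hj₁i (hy ⟨j₁, le_rfl⟩)) (hpair j₁ i hj₁i)
  · have hcof : ∀ i, ∃ j, satI L (B j) ≤ B i := by
      intro i
      by_contra hc
      push_neg at hc
      have hle : ∀ j, B i ≤ satI L (B j) := fun j => (hchain _ _).resolve_left (hc j)
      push_neg at hW1
      obtain ⟨j₂, hj₂⟩ := hW1 i
      obtain ⟨t, htBi, htj₂⟩ := SetLike.not_le_iff_exists.1 hj₂
      exact hW2 ⟨t, fun j ℓ hℓ => L_mul_satI hchain L (hle j htBi) hℓ, j₂, htj₂⟩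
    obtain ⟨x₀, hx₀⟩ := horacle hW1 hW2
    refine ⟨x₀, fun i => ?_⟩
    obtain ⟨j, hj⟩ := hcof i
    have h1 : x₀ - a i = (x₀ - a j) + (a j - a i) := by ring
    rw [h1]
    exact Ideal.add_mem _ (hj (hx₀ j)) (hpair j i (le_trans (le_satI L (B j)) hj))


lemma eta_divide (hchain : ∀ I J : Ideal R, I ≤ J ∨ J ≤ I)
    (hRL : MaximalRing (R ⧸ L)) (hSal : AlmostMaximalRing (Localization.AtPrime L))
    {ι : Type} (a : ι → R) (B : ι → Ideal R) (hBL : ∀ i, B i ≤ L)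
    (κ : R) (hκ0 : κ ≠ 0) (hκK : f κ = 0) (hκB : ∀ i, κ ∈ B i)
    (hpair : ∀ i j, B i ≤ B j → a i - a j ∈ B j)
    (hW1 : ¬ ∃ i₀, ∀ j, B i₀ ≤ B j)
    (hW2 : ¬ ∃ t, (∀ j, ∀ ℓ ∈ L, ℓ * t ∈ B j) ∧ ∃ j₁, t ∉ B j₁) :
    ∃ d : R, ∀ i, d - a i ∈ B i := by
  rcases isEmpty_or_nonempty ι with hι | ⟨⟨i₀⟩⟩
  · exact ⟨0, fun i => (hι.false i).elim⟩
  push_neg at hW2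
  have hKle : ∀ k : R, f k = 0 → ∀ j, k ∈ B j := by
    intro k hk j
    refine hW2 k ?_ j
    intro j' ℓ hℓ
    obtain ⟨s, hs, hsk⟩ := (loc_ker L).1 hk
    obtain ⟨r, hr⟩ := Ideal.mem_span_singleton'.1 (L_le_span' L hchain hs hℓ)
    have h1 : ℓ * k = r * (s * k) := by rw [← hr]; ring
    rw [h1, hsk, mul_zero]
    exact (B j').zero_mem
  push_neg at hW1
  obtain ⟨j₁, hj₁⟩ := hW1 i₀
  obtain ⟨η, hηB, hηj₁⟩ := SetLike.not_le_iff_exists.1 hj₁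
  have hηL : η ∈ L := hBL i₀ hηB
  have hηK : f η ≠ 0 := fun h => hηj₁ (hKle η h j₁)
  have hκη : κ ∈ Ideal.span {η} := by
    rcases hchain (Ideal.span {κ}) (Ideal.span {η}) with h | h
    · exact h (Ideal.subset_span rfl)
    · exfalso
      obtain ⟨r, hr⟩ := Ideal.mem_span_singleton'.1 (h (Ideal.subset_span rfl))
      exact hηK (by rw [← hr, map_mul, hκK, mul_zero])
  obtain ⟨c, hc⟩ := Ideal.mem_span_singleton'.1 hκη
  have hc0 : f c ≠ 0 := by
    intro h
    obtain ⟨s, hs, hsc⟩ := (loc_ker L).1 h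
    obtain ⟨r, hr⟩ := Ideal.mem_span_singleton'.1 (L_le_span' L hchain hs hηL)
    refine hκ0 ?_
    have h1 : κ = r * (s * c) := by rw [← hc, ← hr]; ring
    rw [h1, hsc, mul_zero]
  have hspan : B j₁ ≤ Ideal.span {η} := by
    rcases hchain (B j₁) (Ideal.span {η}) with h | h
    · exact h
    · exact absurd (h (Ideal.subset_span rfl)) hηj₁
  have hgex : ∀ j : {j : ι // B j ≤ B j₁}, ∃ g, g * η = a j.1 - a j₁ := fun j =>
    Ideal.mem_span_singleton'.1 (hspan (hpair j.1 j₁ j.2))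
  choose g hg using hgex
  set G : {j : ι // B j ≤ B j₁} → Ideal R := fun j => colonI η (B j.1) with hGdef
  have hcG : ∀ j : {j : ι // B j ≤ B j₁}, c ∈ G j := fun j =>
    show η * c ∈ B j.1 by rw [mul_comm, hc]; exact hκB j.1
  have hGpair : ∀ j k : {j : ι // B j ≤ B j₁}, G j ≤ G k → g j - g k ∈ G k := by
    intro j k hjk
    have key : ∀ p q : {j : ι // B j ≤ B j₁}, B p.1 ≤ B q.1 → g p - g q ∈ G q := by
      intro p q hpq
      show η * (g p - g q) ∈ B q.1
      have h1 : η * (g p - g q) = (g p * η) - (g q * η) := by ring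
      rw [h1, hg, hg]
      have h2 : (a p.1 - a j₁) - (a q.1 - a j₁) = a p.1 - a q.1 := by ring
      rw [h2]
      exact hpair p.1 q.1 hpq
    rcases hchain (B j.1) (B k.1) with h | h
    · exact key j k h
    · have h2 := hjk (key k j h)
      have h3 : g j - g k = -(g k - g j) := by ring
      rw [h3]
      exact Submodule.neg_mem _ h2
  have hGsmall : ∀ j : {p : {j : ι // B j ≤ B j₁} // ¬ L ≤ G p}, G j.1 ≤ L := fun j =>
    (hchain _ _).resolve_left j.2
  have hpairSF : ∀ p q : {p : {j : ι // B j ≤ B j₁} // ¬ L ≤ G p},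
      G p.1 ≤ G q.1 → g p.1 - g q.1 ∈ G q.1 := fun p q h => hGpair p.1 q.1 h
  obtain ⟨eS, heS⟩ := small_solve L hchain hRL
    (ι := {p : {j : ι // B j ≤ B j₁} // ¬ L ≤ G p})
    (fun p => g p.1) (fun p => G p.1) hGsmall hpairSF
    (fun _ _ => sigma_almost L hchain hSal _ _ hGsmall hpairSF c hc0
      (fun p => le_satI L _ (hcG p.1)))
  obtain ⟨eB, heB⟩ := rl_solve L hRL {p : {j : ι // B j ≤ B j₁} // L ≤ G p}
    (fun p => g p.1) (fun p => G p.1) (fun p => p.2)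
    (pair_to_fip hchain _ _ (fun p q h => hGpair p.1 q.1 h))
  have hcomb : ∃ e, ∀ j : {j : ι // B j ≤ B j₁}, e - g j ∈ G j := by
    by_cases hex : ∃ p : {j : ι // B j ≤ B j₁}, ¬ L ≤ G p
    · obtain ⟨p₀, hp₀⟩ := hex
      refine ⟨eS, fun j => ?_⟩
      by_cases hj : L ≤ G j
      · have h1 : eS - g j = (eS - g p₀) + (g p₀ - g j) := by ring
        rw [h1]
        have hp₀j : G p₀ ≤ G j := le_trans ((hchain _ _).resolve_left hp₀) hj
        exact Submodule.add_mem _ (hp₀j (heS ⟨p₀, hp₀⟩)) (hGpair p₀ j hp₀j)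
      · exact heS ⟨j, hj⟩
    · push_neg at hex
      exact ⟨eB, fun j => heB ⟨j, hex j⟩⟩
  obtain ⟨e, he⟩ := hcomb
  refine ⟨a j₁ + η * e, fun i => ?_⟩
  by_cases hiT : B i ≤ B j₁
  · have hgi := hg ⟨i, hiT⟩
    have h3 : a j₁ + η * e - a i = η * (e - g ⟨i, hiT⟩) := by
      rw [mul_sub, mul_comm η (g _), hgi]; ring
    rw [h3]
    exact he ⟨i, hiT⟩
  · have hj₁i : B j₁ ≤ B i := (hchain _ _).resolve_left hiT
    have hz : η * g ⟨j₁, le_rfl⟩ = 0 := by rw [mul_comm, hg]; simp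
    have h3 : a j₁ + η * e - a i = η * (e - g ⟨j₁, le_rfl⟩) + (a j₁ - a i) := by
      rw [mul_sub, hz]; ring
    rw [h3]
    exact Ideal.add_mem _ (hj₁i (he ⟨j₁, le_rfl⟩)) (hpair j₁ i hj₁i)


/-- From the finite intersection property, differences of centers lie in the larger submodule. -/
lemma fip_pair {A : Type*} [CommRing A] {M : Type*} [AddCommGroup M] [Module A M]
    {ι : Type} (a : ι → M) (N : ι → Submodule A M)
    (hFIP : ∀ s : Finset ι, ∃ x : M, ∀ i ∈ s, x - a i ∈ N i) :
    ∀ i j, N i ≤ N j → a i - a j ∈ N j := by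
  classical
  intro i j hij
  obtain ⟨x, hx⟩ := hFIP {i, j}
  have hxi := hx i (by simp)
  have hxj := hx j (by simp)
  have h1 : a i - a j = (x - a j) - (x - a i) := by abel
  rw [h1]
  exact Submodule.sub_mem _ hxj (hij hxi)

lemma backward_max (hchain : ∀ I J : Ideal R, I ≤ J ∨ J ≤ I)
    (hRL : MaximalRing (R ⧸ L)) (hS : MaximalRing (Localization.AtPrime L)) :
    MaximalRing R := by
  intro ι a N hFIP
  have hpair : ∀ i j, N i ≤ N j → a i - a j ∈ N j := fip_pair a N hFIP
  have hsmall : ∀ i : {i : ι // ¬ L ≤ N i}, N i.1 ≤ L := fun i => (hchain _ _).resolve_left i.2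
  obtain ⟨dS, hdS⟩ := small_solve L hchain hRL (ι := {i : ι // ¬ L ≤ N i})
    (fun i => a i.1) (fun i => N i.1) hsmall (fun p q h => hpair p.1 q.1 h)
    (fun _ _ => sigma_max L hchain hS _ _ hsmall (fun p q h => hpair p.1 q.1 h))
  obtain ⟨dB, hdB⟩ := rl_solve L hRL {i : ι // L ≤ N i} (fun i => a i.1) (fun i => N i.1)
    (fun i => i.2) (pair_to_fip hchain _ _ (fun p q h => hpair p.1 q.1 h))
  by_cases hex : ∃ i : ι, ¬ L ≤ N i
  · obtain ⟨i₁, hi₁⟩ := hex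
    refine ⟨dS, fun i => ?_⟩
    by_cases hi : L ≤ N i
    · have h1 : dS - a i = (dS - a i₁) + (a i₁ - a i) := by ring
      rw [h1]
      have h2 : N i₁ ≤ N i := le_trans ((hchain _ _).resolve_left hi₁) hi
      exact Submodule.add_mem _ (h2 (hdS ⟨i₁, hi₁⟩)) (hpair i₁ i h2)
    · exact hdS ⟨i, hi⟩
  · push_neg at hex
    exact ⟨dB, fun i => hdB ⟨i, hex i⟩⟩

lemma backward_almost (hchain : ∀ I J : Ideal R, I ≤ J ∨ J ≤ I)
    (hRL : MaximalRing (R ⧸ L)) (hSal : AlmostMaximalRing (Localization.AtPrime L)) :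
    AlmostMaximalRing R := by
  intro A hA ι p N hFIP
  obtain ⟨κ, hκA, hκ0⟩ := (Submodule.ne_bot_iff A).1 hA
  have hsurj := Submodule.Quotient.mk_surjective A
  choose a ha using fun i => hsurj (p i)
  set B : ι → Ideal R := fun i => Submodule.comap A.mkQ (N i) with hBdef
  have hAB : ∀ i, A ≤ B i := by
    intro i x hx
    show A.mkQ x ∈ N i
    have h0 : A.mkQ x = 0 := by
      rw [Submodule.mkQ_apply, Submodule.Quotient.mk_eq_zero]
      exact hx
    rw [h0]
    exact (N i).zero_mem
  have hFIPR : ∀ s : Finset ι, ∃ x : R, ∀ i ∈ s, x - a i ∈ B i := by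
    intro s
    obtain ⟨xq, hx⟩ := hFIP s
    obtain ⟨x, rfl⟩ := hsurj xq
    refine ⟨x, fun i hi => ?_⟩
    show A.mkQ (x - a i) ∈ N i
    rw [map_sub, Submodule.mkQ_apply, Submodule.mkQ_apply, ha]
    exact hx i hi
  have hpair : ∀ i j, B i ≤ B j → a i - a j ∈ B j := fip_pair a B hFIPR
  have hsmall : ∀ i : {i : ι // ¬ L ≤ B i}, B i.1 ≤ L := fun i => (hchain _ _).resolve_left i.2
  have hpairSF : ∀ p q : {i : ι // ¬ L ≤ B i}, B p.1 ≤ B q.1 → a p.1 - a q.1 ∈ B q.1 :=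
    fun p q h => hpair p.1 q.1 h
  obtain ⟨dS, hdS⟩ := small_solve L hchain hRL (ι := {i : ι // ¬ L ≤ B i})
    (fun i => a i.1) (fun i => B i.1) hsmall hpairSF
    (by
      intro hW1 hW2
      by_cases hx1 : ∃ x₁, (∀ i : {i : ι // ¬ L ≤ B i}, x₁ ∈ satI L (B i.1)) ∧
          algebraMap R (Localization.AtPrime L) x₁ ≠ 0
      · obtain ⟨x₁, h1, h2⟩ := hx1
        exact sigma_almost L hchain hSal _ _ hsmall hpairSF x₁ h2 h1
      · push_neg at hx1
        have hκK : algebraMap R (Localization.AtPrime L) κ = 0 :=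
          hx1 κ (fun i => le_satI L _ (hAB i.1 hκA))
        obtain ⟨d, hd⟩ := eta_divide L hchain hRL hSal (ι := {i : ι // ¬ L ≤ B i})
          (fun i => a i.1) (fun i => B i.1)
          hsmall κ hκ0 hκK (fun i => hAB i.1 hκA) hpairSF hW1 hW2
        exact ⟨d, fun i => le_satI L _ (hd i)⟩)
  obtain ⟨dB, hdB⟩ := rl_solve L hRL {i : ι // L ≤ B i} (fun i => a i.1) (fun i => B i.1)
    (fun i => i.2) (pair_to_fip hchain _ _ (fun p q h => hpair p.1 q.1 h))
  have hfin : ∃ d : R, ∀ i, d - a i ∈ B i := by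
    by_cases hex : ∃ i : ι, ¬ L ≤ B i
    · obtain ⟨i₁, hi₁⟩ := hex
      refine ⟨dS, fun i => ?_⟩
      by_cases hi : L ≤ B i
      · have h1 : dS - a i = (dS - a i₁) + (a i₁ - a i) := by ring
        rw [h1]
        have h2 : B i₁ ≤ B i := le_trans ((hchain _ _).resolve_left hi₁) hi
        exact Submodule.add_mem _ (h2 (hdS ⟨i₁, hi₁⟩)) (hpair i₁ i h2)
      · exact hdS ⟨i, hi⟩
    · push_neg at hex
      exact ⟨dB, fun i => hdB ⟨i, hex i⟩⟩
  obtain ⟨d, hd⟩ := hfin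
  refine ⟨A.mkQ d, fun i => ?_⟩
  have h1 : A.mkQ d - p i = A.mkQ (d - a i) := by
    rw [map_sub, Submodule.mkQ_apply, Submodule.mkQ_apply, ha]
  rw [h1]
  exact hd i


lemma forward_max_quot (L' : Ideal R) (hR : MaximalRing R) : MaximalRing (R ⧸ L') := by
  intro ι a N hFIP
  choose b hb using fun i => Ideal.Quotient.mk_surjective (a i)
  set B : ι → Ideal R := fun i => Ideal.comap (Ideal.Quotient.mk L') (N i) with hBdef
  have hFIPR : ∀ s : Finset ι, ∃ x : R, ∀ i ∈ s, x - b i ∈ B i := by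
    intro s
    obtain ⟨xq, hx⟩ := hFIP s
    obtain ⟨x, rfl⟩ := Ideal.Quotient.mk_surjective xq
    refine ⟨x, fun i hi => ?_⟩
    show Ideal.Quotient.mk L' (x - b i) ∈ N i
    rw [map_sub, hb]
    exact hx i hi
  obtain ⟨x, hx⟩ := hR ι b B hFIPR
  refine ⟨Ideal.Quotient.mk L' x, fun i => ?_⟩
  rw [← hb, ← map_sub]
  exact hx i

/-- An ideal of `R ⧸ L` seen as an `R`-submodule. -/
def ringSubToRSub (L' : Ideal R) (N : Ideal (R ⧸ L')) : Submodule R (R ⧸ L') where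
  carrier := N
  add_mem' := fun ha hb => N.add_mem ha hb
  zero_mem' := N.zero_mem
  smul_mem' := by
    intro c x hx
    obtain ⟨y, rfl⟩ := Ideal.Quotient.mk_surjective x
    have h1 : c • (Ideal.Quotient.mk L' y) = Ideal.Quotient.mk L' c * Ideal.Quotient.mk L' y := by
      rw [← map_mul]
      rfl
    rw [h1]
    exact N.mul_mem_left _ hx

lemma forward_almost_quot (hL : L ≠ ⊥) (hR : AlmostMaximalRing R) : MaximalRing (R ⧸ L) := by
  have hLC : LinearlyCompact R (R ⧸ L) := hR L hL
  intro ι a N hFIP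
  obtain ⟨x, hx⟩ := hLC ι a (fun i => ringSubToRSub L (N i)) hFIP
  exact ⟨x, hx⟩

lemma forward_max_loc (hchain : ∀ I J : Ideal R, I ≤ J ∨ J ≤ I) (hR : MaximalRing R) :
    MaximalRing (Localization.AtPrime L) := by
  intro ι σ J hFIP
  have hpairS : ∀ i j, J i ≤ J j → σ i - σ j ∈ J j := fip_pair σ J hFIP
  by_cases hex : ∃ i₁, J i₁ ≠ ⊤
  · obtain ⟨i₁, hi₁⟩ := hex
    have hrep : ∀ j : {j : ι // J j ≤ J i₁}, ∃ m, m ∈ L ∧ f m = σ j.1 - σ i₁ := by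
      intro j
      obtain ⟨m, hm1, hm2⟩ := proper_rep L hchain hi₁ (hpairS j.1 i₁ j.2)
      exact ⟨m, hm1, hm2⟩
    choose c hc1 hc2 using hrep
    set D : {j : ι // J j ≤ J i₁} → Ideal R := fun j => Ideal.comap f (J j.1) with hDdef
    have hJle : ∀ p q : {j : ι // J j ≤ J i₁}, D p ≤ D q → J p.1 ≤ J q.1 := by
      intro p q h
      rw [← IsLocalization.map_comap L.primeCompl (Localization.AtPrime L) (J p.1),
        ← IsLocalization.map_comap L.primeCompl (Localization.AtPrime L) (J q.1)]
      exact Ideal.map_mono h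
    have hpairD : ∀ p q : {j : ι // J j ≤ J i₁}, D p ≤ D q → c p - c q ∈ D q := by
      intro p q h
      show f (c p - c q) ∈ J q.1
      rw [map_sub, hc2 p, hc2 q]
      have h1 : (σ p.1 - σ i₁) - (σ q.1 - σ i₁) = σ p.1 - σ q.1 := by ring
      rw [h1]
      exact hpairS p.1 q.1 (hJle p q h)
    obtain ⟨d, hd⟩ := hR _ c D (pair_to_fip hchain _ _ hpairD)
    refine ⟨σ i₁ + f d, fun i => ?_⟩
    by_cases hiT : J i ≤ J i₁
    · have h1 : σ i₁ + f d - σ i = f (d - c ⟨i, hiT⟩) := by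
        rw [map_sub, hc2 ⟨i, hiT⟩]; ring
      rw [h1]
      exact hd ⟨i, hiT⟩
    · have hi₁i : J i₁ ≤ J i := (Schain L hchain _ _).resolve_left hiT
      have hz : f (c ⟨i₁, le_rfl⟩) = 0 := by rw [hc2]; simp
      have h3 : σ i₁ + f d - σ i = f (d - c ⟨i₁, le_rfl⟩) + (σ i₁ - σ i) := by
        rw [map_sub, hz]; ring
      rw [h3]
      exact Submodule.add_mem _ (hi₁i (hd ⟨i₁, le_rfl⟩)) (hpairS i₁ i hi₁i)
  · push_neg at hex
    refine ⟨0, fun i => ?_⟩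
    rw [hex i]
    exact Submodule.mem_top

lemma forward_almost_loc (hchain : ∀ I J : Ideal R, I ≤ J ∨ J ≤ I)
    (hR : AlmostMaximalRing R) : AlmostMaximalRing (Localization.AtPrime L) := by
  intro Jq hJq ι q Nq hFIP
  have hA : Ideal.comap f Jq ≠ ⊥ := comap_ne_bot L hJq
  set A : Ideal R := Ideal.comap f Jq with hAdef
  have hLC : LinearlyCompact R (R ⧸ A) := hR A hA
  have hsurj := Submodule.Quotient.mk_surjective Jq
  choose σ hσ using fun i => hsurj (q i)
  set J : ι → Ideal (Localization.AtPrime L) := fun i => Submodule.comap Jq.mkQ (Nq i) with hJdef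
  have hFIPS : ∀ s : Finset ι, ∃ x, ∀ i ∈ s, x - σ i ∈ J i := by
    intro s
    obtain ⟨xq, hx⟩ := hFIP s
    obtain ⟨x, rfl⟩ := hsurj xq
    refine ⟨x, fun i hi => ?_⟩
    show Jq.mkQ (x - σ i) ∈ Nq i
    rw [map_sub, Submodule.mkQ_apply, Submodule.mkQ_apply, hσ]
    exact hx i hi
  have hpairS : ∀ i j, J i ≤ J j → σ i - σ j ∈ J j := fip_pair σ J hFIPS
  have hfin : ∃ τ, ∀ i, τ - σ i ∈ J i := by
    by_cases hex : ∃ i₁, J i₁ ≠ ⊤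
    · obtain ⟨i₁, hi₁⟩ := hex
      have hrep : ∀ j : {j : ι // J j ≤ J i₁}, ∃ m, m ∈ L ∧ f m = σ j.1 - σ i₁ := by
        intro j
        obtain ⟨m, hm1, hm2⟩ := proper_rep L hchain hi₁ (hpairS j.1 i₁ j.2)
        exact ⟨m, hm1, hm2⟩
      choose c hc1 hc2 using hrep
      set D : {j : ι // J j ≤ J i₁} → Ideal R := fun j => Ideal.comap f (J j.1) with hDdef
      have hAD : ∀ j, A ≤ D j := by
        intro j x hx
        show f x ∈ J j.1
        have h1 : f x ∈ Jq := hx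
        show Jq.mkQ (f x) ∈ Nq j.1
        have h0 : Jq.mkQ (f x) = 0 := by
          rw [Submodule.mkQ_apply, Submodule.Quotient.mk_eq_zero]
          exact h1
        rw [h0]
        exact (Nq j.1).zero_mem
      have hJle : ∀ p q' : {j : ι // J j ≤ J i₁}, D p ≤ D q' → J p.1 ≤ J q'.1 := by
        intro p q' h
        rw [← IsLocalization.map_comap L.primeCompl (Localization.AtPrime L) (J p.1),
          ← IsLocalization.map_comap L.primeCompl (Localization.AtPrime L) (J q'.1)]
        exact Ideal.map_mono h
      have hpairD : ∀ p q' : {j : ι // J j ≤ J i₁}, D p ≤ D q' → c p - c q' ∈ D q' := by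
        intro p q' h
        show f (c p - c q') ∈ J q'.1
        rw [map_sub, hc2 p, hc2 q']
        have h1 : (σ p.1 - σ i₁) - (σ q'.1 - σ i₁) = σ p.1 - σ q'.1 := by ring
        rw [h1]
        exact hpairS p.1 q'.1 (hJle p q' h)
      have hFIPD : ∀ s : Finset {j : ι // J j ≤ J i₁}, ∃ x : R ⧸ A, ∀ j ∈ s,
          x - A.mkQ (c j) ∈ Submodule.map A.mkQ (D j) := by
        intro s
        rcases s.eq_empty_or_nonempty with rfl | hs
        · exact ⟨0, by simp⟩
        · obtain ⟨j, hjs, hmin⟩ := chainMin hchain D s hs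
          refine ⟨A.mkQ (c j), fun k hks => ?_⟩
          rw [← map_sub]
          exact Submodule.mem_map_of_mem (hpairD j k (hmin k hks))
      obtain ⟨xq, hxq⟩ := hLC _ (fun j => A.mkQ (c j)) (fun j => Submodule.map A.mkQ (D j)) hFIPD
      obtain ⟨d, rfl⟩ := Submodule.Quotient.mk_surjective A xq
      have hd : ∀ j : {j : ι // J j ≤ J i₁}, d - c j ∈ D j := by
        intro j
        have h1 : A.mkQ (d - c j) ∈ Submodule.map A.mkQ (D j) := by
          rw [map_sub]
          exact hxq j
        have h2 : d - c j ∈ Submodule.comap A.mkQ (Submodule.map A.mkQ (D j)) := h1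
        rwa [Submodule.comap_map_eq, Submodule.ker_mkQ, sup_eq_left.2 (hAD j)] at h2
      refine ⟨σ i₁ + f d, fun i => ?_⟩
      by_cases hiT : J i ≤ J i₁
      · have h1 : σ i₁ + f d - σ i = f (d - c ⟨i, hiT⟩) := by
          rw [map_sub, hc2 ⟨i, hiT⟩]; ring
        rw [h1]
        exact hd ⟨i, hiT⟩
      · have hi₁i : J i₁ ≤ J i := (Schain L hchain _ _).resolve_left hiT
        have hz : f (c ⟨i₁, le_rfl⟩) = 0 := by rw [hc2]; simp
        have h3 : σ i₁ + f d - σ i = f (d - c ⟨i₁, le_rfl⟩) + (σ i₁ - σ i) := by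
          rw [map_sub, hz]; ring
        rw [h3]
        exact Submodule.add_mem _ (hi₁i (hd ⟨i₁, le_rfl⟩)) (hpairS i₁ i hi₁i)
    · push_neg at hex
      refine ⟨0, fun i => ?_⟩
      rw [hex i]
      exact Submodule.mem_top
  obtain ⟨τ, hτ⟩ := hfin
  refine ⟨Jq.mkQ τ, fun i => ?_⟩
  have h1 : Jq.mkQ τ - q i = Jq.mkQ (τ - σ i) := by
    rw [map_sub, Submodule.mkQ_apply, Submodule.mkQ_apply, hσ]
  rw [h1]
  exact hτ i

end Stmt1


/-- for a valuation ring `R` (ideals totally ordered, possibly with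
zero divisors) and a nonzero prime `L`, `R` is maximal (resp. almost maximal) iff
`R/L` is maximal and `R_L` is maximal (resp. almost maximal). -/
theorem stmt_1 (R : Type u) [CommRing R]
    (hchain : ∀ I J : Ideal R, I ≤ J ∨ J ≤ I)
    (L : Ideal R) [L.IsPrime] (hL : L ≠ ⊥) :
    (MaximalRing R ↔
      MaximalRing (R ⧸ L) ∧ MaximalRing (Localization.AtPrime L)) ∧
    (AlmostMaximalRing R ↔
      MaximalRing (R ⧸ L) ∧ AlmostMaximalRing (Localization.AtPrime L)) := by
  constructor
  · constructor
    · intro hR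
      exact ⟨Stmt1.forward_max_quot L hR, Stmt1.forward_max_loc L hchain hR⟩
    · rintro ⟨h1, h2⟩
      exact Stmt1.backward_max L hchain h1 h2
  · constructor
    · intro hR
      exact ⟨Stmt1.forward_almost_quot L hL hR, Stmt1.forward_almost_loc L hchain hR⟩
    · rintro ⟨h1, h2⟩
      exact Stmt1.backward_almost L hchain h1 h2
end

section
/- Let R be a valuation domain with maximal ideal P and let U be a torsion-free R-module with U = PU. Then for every nonzero x ∈ U, x ∉ c(x)U, where c(x) is the content ideal of x (the intersection of all ideals A with x ∈ AU). -/
open Pointwise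

universe u

/-- if `U` is a torsion-free module over a valuation domain with
`U = PU`, then `x ∉ c(x)U` for every nonzero `x ∈ U`. -/
theorem stmt_4 (R : Type u) [CommRing R] [IsDomain R] [ValuationRing R]
    (U : Type u) [AddCommGroup U] [Module R U] [NoZeroSMulDivisors R U]
    (hdiv : (IsLocalRing.maximalIdeal R) • (⊤ : Submodule R U) = ⊤)
    (x : U) (hx : x ≠ 0) :
    x ∉ (contentIdeal R x) • (⊤ : Submodule R U) := by

  classical
  intro h
  set c := contentIdeal R x with hc
  -- c ≤ anything A with x ∈ A•⊤
  have hle : ∀ A : Ideal R, x ∈ A • (⊤ : Submodule R U) → c ≤ A := by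
    intro A hA
    exact iInf₂_le A hA
  -- get a finite representation
  have htop : (⊤ : Submodule R U) = Submodule.span R (Set.range (id : U → U)) := by
    simp [Submodule.span_univ]
  rw [htop] at h
  obtain ⟨a, hac, hsum⟩ := (Submodule.mem_ideal_smul_span_iff_exists_sum c id x).1 h
  set J : Ideal R := Ideal.span ↑(a.support.image ⇑a) with hJ
  have hJfg : J.FG := ⟨_, hJ.symm⟩
  have hxJ : x ∈ J • (⊤ : Submodule R U) := by
    rw [← hsum]
    refine Submodule.sum_mem _ ?_
    intro i hi
    refine Submodule.smul_mem_smul ?_ trivial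
    exact Ideal.subset_span (Finset.mem_image_of_mem _ hi)
  have hJc : J ≤ c := by
    rw [hJ, Ideal.span_le]
    intro r hr
    simp only [Finset.coe_image, Set.mem_image] at hr
    obtain ⟨i, _, rfl⟩ := hr
    exact hac i
  have hcJ : c ≤ J := hle J hxJ
  have hceq : c = J := le_antisymm hcJ hJc
  obtain ⟨g, hg⟩ := (IsBezout.isPrincipal_of_FG J hJfg)
  -- c ≤ P * c
  have hPc : c ≤ IsLocalRing.maximalIdeal R * c := by
    apply hle
    rw [mul_comm, mul_smul, hdiv]
    rw [htop]
    exact (Submodule.mem_ideal_smul_span_iff_exists_sum c id x).2 ⟨a, hac, hsum⟩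
  have hgc : g ∈ c := by rw [hceq, hg]; exact Ideal.subset_span rfl
  have hgm : g ∈ Ideal.span {g} * IsLocalRing.maximalIdeal R := by
    have := hPc hgc
    rw [hceq, hg] at this
    rwa [mul_comm]
  obtain ⟨p, hp, hpg⟩ := Ideal.mem_span_singleton_mul.1 hgm
  have hg0 : g = 0 := by
    have h1 : g * (p - 1) = 0 := by linear_combination hpg
    rcases mul_eq_zero.1 h1 with h | h
    · exact h
    · exfalso
      have hp1 : p = 1 := by linear_combination h
      exact (IsLocalRing.maximalIdeal.isMaximal R).ne_top
        (Ideal.eq_top_of_isUnit_mem _ (hp1 ▸ hp) isUnit_one)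
  subst hg0
  have hJbot : J = ⊥ := by
    rw [hg]
    exact Ideal.span_singleton_eq_bot.2 rfl
  rw [hJbot, Submodule.bot_smul] at hxJ
  exact hx (Submodule.mem_bot R |>.1 hxJ)
end

section
/- Let R be a valuation domain with maximal ideal P, U a torsion-free R-module with U = PU, x, y nonzero elements of U and t ∈ R with x = ty. Then the content ideals satisfy c(y) = (c(x) : t), i.e., c(y) = t^{-1}c(x). -/
open Pointwise

universe u

/-- Over a valuation domain, any element of `A • ⊤` is of the form `a • u` with `a ∈ A`. -/
lemma exists_smul_of_mem_smul_top {R U : Type*} [CommRing R] [IsDomain R] [ValuationRing R]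
    [AddCommGroup U] [Module R U] {A : Ideal R} {x : U}
    (h : x ∈ A • (⊤ : Submodule R U)) : ∃ a ∈ A, ∃ u : U, x = a • u := by
  refine Submodule.smul_induction_on h ?_ ?_
  · intro a ha u _; exact ⟨a, ha, u, rfl⟩
  · rintro x₁ x₂ ⟨a₁, ha₁, u₁, rfl⟩ ⟨a₂, ha₂, u₂, rfl⟩
    obtain ⟨c, hc | hc⟩ := ValuationRing.cond a₁ a₂
    · exact ⟨a₁, ha₁, u₁ + c • u₂, by rw [smul_add, smul_smul, hc]⟩
    · exact ⟨a₂, ha₂, c • u₁ + u₂, by rw [smul_add, smul_smul, hc]⟩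

/-- with `U` torsion-free, `U = PU`, `x = t • y` (`x, y ≠ 0`), one has
`c(y) = t⁻¹ c(x) = (c(x) : t)`. -/
theorem stmt_5 (R : Type u) [CommRing R] [IsDomain R] [ValuationRing R]
    (U : Type u) [AddCommGroup U] [Module R U] [NoZeroSMulDivisors R U]
    (hdiv : (IsLocalRing.maximalIdeal R) • (⊤ : Submodule R U) = ⊤)
    (x y : U) (hx : x ≠ 0) (hy : y ≠ 0) (t : R) (hxy : x = t • y) :
    contentIdeal R y = (contentIdeal R x).colon (Ideal.span {t}) := by
  have ht : t ≠ 0 := by rintro rfl; rw [zero_smul] at hxy; exact hx hxy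
  ext r
  simp only [contentIdeal, Submodule.mem_iInf, Set.mem_setOf_eq, Ideal.mem_colon_span_singleton]
  constructor
  · intro hr A hA
    obtain ⟨a, haA, u, hu⟩ := exists_smul_of_mem_smul_top hA
    rw [hxy] at hu
    obtain ⟨c, hc | hc⟩ := ValuationRing.cond t a
    · have hy' : y = c • u := by
        have h2 : t • y = t • (c • u) := by rw [hu, smul_smul, hc]
        exact smul_right_injective U ht h2
      have hmem : y ∈ (A.colon (Ideal.span {t})) • (⊤ : Submodule R U) := by
        rw [hy']
        refine Submodule.smul_mem_smul ?_ trivial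
        rw [Ideal.mem_colon_span_singleton, mul_comm, hc]; exact haA
      have := hr _ hmem
      rwa [Ideal.mem_colon_span_singleton] at this
    · exact Ideal.mul_mem_left A r (hc ▸ Ideal.mul_mem_right c A haA)
  · intro hr B hB
    have hx' : x ∈ (Ideal.span {t} * B) • (⊤ : Submodule R U) := by
      rw [hxy, ← Ideal.smul_eq_mul, Submodule.smul_assoc]
      exact Submodule.smul_mem_smul (Ideal.mem_span_singleton_self t) hB
    have h2 := hr _ hx'
    obtain ⟨z, hzB, hz⟩ := Ideal.mem_span_singleton_mul.mp h2
    have : z = r := by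
      apply mul_left_cancel₀ ht
      rw [hz, mul_comm]
    rwa [this] at hzB
end

section
/- Let R be a valuation ring (possibly with zero divisors), U a uniserial R-module, and L a prime ideal of R with L strictly contained in U^#. Then the localization U_L is a cyclic R_L-module. -/
open Pointwise

universe u

/-- for a valuation ring `R` (possibly with zero divisors), a uniserial
module `U` and a prime `L ⊊ U^♯`, the localization `U_L` is a cyclic `R_L`-module. -/
theorem stmt_10 (R : Type u) [CommRing R]
    (hchain : ∀ I J : Ideal R, I ≤ J ∨ J ≤ I)
    (U : Type u) [AddCommGroup U] [Module R U] (huni : IsUniserialModule R U)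
    (L : Ideal R) [L.IsPrime] (hL : (L : Set R) ⊂ sharpSet R U) :
    ∃ x : LocalizedModule L.primeCompl U,
      Submodule.span (Localization L.primeCompl) {x} = ⊤ := by
  -- pick `s ∈ U^♯ \ L`
  obtain ⟨s, hs_sharp, hsL⟩ := Set.exists_of_ssubset hL
  -- pick `u ∉ sU`
  have : ∃ u : U, u ∉ s • (⊤ : Submodule R U) := by
    by_contra h
    push_neg at h
    exact hs_sharp (Submodule.eq_top_iff'.2 h)
  obtain ⟨u, hu⟩ := this
  refine ⟨LocalizedModule.mk u 1, ?_⟩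
  rw [eq_top_iff]
  rintro z -
  induction z using LocalizedModule.induction_on with
  | h v t =>
    have key : LocalizedModule.mk v (1 : L.primeCompl) ∈
        Submodule.span (Localization L.primeCompl) {LocalizedModule.mk u 1} := by
      rcases huni (Submodule.span R {v}) (Submodule.span R {u}) with hvu | huv
      · obtain ⟨a, ha⟩ := Submodule.mem_span_singleton.1
          (hvu (Submodule.mem_span_singleton_self v))
        have : LocalizedModule.mk v (1 : L.primeCompl)
            = a • LocalizedModule.mk u (1 : L.primeCompl) := by
          rw [LocalizedModule.smul'_mk, ha]
        rw [this, ← algebraMap_smul (Localization L.primeCompl) a]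
        exact Submodule.smul_mem _ _ (Submodule.mem_span_singleton_self _)
      · obtain ⟨r, hr⟩ := Submodule.mem_span_singleton.1
          (huv (Submodule.mem_span_singleton_self u))
        by_cases hrL : r ∈ L
        · exfalso
          have hrs : r ∈ Ideal.span {s} := by
            rcases hchain (Ideal.span {r}) (Ideal.span {s}) with h1 | h2
            · exact h1 (Ideal.mem_span_singleton_self r)
            · exfalso
              obtain ⟨c, hc⟩ := Ideal.mem_span_singleton'.1
                (h2 (Ideal.mem_span_singleton_self s))
              exact hsL (hc ▸ L.mul_mem_left c hrL)
          obtain ⟨c, hc⟩ := Ideal.mem_span_singleton'.1 hrs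
          apply hu
          have : u = c • (s • v) := by
            rw [← hr, ← hc, mul_smul]
          rw [this]
          exact Submodule.smul_mem _ c
            (Submodule.smul_mem_pointwise_smul v s ⊤ Submodule.mem_top)
        · have : LocalizedModule.mk v (1 : L.primeCompl)
              = (Localization.mk 1 ⟨r, hrL⟩ : Localization L.primeCompl) • LocalizedModule.mk u (1 : L.primeCompl) := by
            rw [LocalizedModule.mk_smul_mk, one_smul, mul_one, ← hr,
              show ((⟨r, hrL⟩ : L.primeCompl) : R) • v = (⟨r, hrL⟩ : L.primeCompl) • v from rfl,
              LocalizedModule.mk_cancel]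
          rw [this]
          exact Submodule.smul_mem _ _ (Submodule.mem_span_singleton_self _)
    have : LocalizedModule.mk v t
        = (Localization.mk 1 t : Localization L.primeCompl) • LocalizedModule.mk v (1 : L.primeCompl) := by
      rw [LocalizedModule.mk_smul_mk, one_smul, mul_one]
    rw [this]
    exact Submodule.smul_mem _ _ key
end
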